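/- Let U be a Banach space with a bimonotone basis such that ℓ₁ is finitely represented on block sequences with constant 2 (i.e., for every m there is a normalized block sequence of length m that is 2-equivalent to the ℓ₁^m basis). Then for every n ∈ ℕ there exists x ∈ U with 1/2 ≤ ‖x‖ ≤ ‖x‖_n ≤ 2, where ‖x‖_n = sup{∑_{j=1}^n ‖E_j x‖ : E_1 < ... < E_n intervals}. -/

import Mathlib

open Finset in
/-- The restriction `Ex` of a finitely supported vector `x` to the coordinates in `E`. -/
noncomputable def restrictF (x : ℕ →₀ ℝ) (E : Finset ℕ) : ℕ →₀ ℝ :=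
  Finsupp.filter (· ∈ E) x

/-- A (Banach) space with a bimonotone Schauder basis, modelled on the linear span of the
basis: the space of finitely supported real sequences endowed with a norm `N` for which
restrictions to intervals have norm at most the norm of the vector. -/
structure BmBasis where
  N : (ℕ →₀ ℝ) → ℝ
  norm_nonneg : ∀ x, 0 ≤ N x
  norm_eq_zero_iff : ∀ x, N x = 0 ↔ x = 0
  norm_add_le : ∀ x y, N (x + y) ≤ N x + N y
  norm_smul : ∀ (a : ℝ) (x), N (a • x) = |a| * N x
  bimono : ∀ (x : ℕ →₀ ℝ) (a b : ℕ), N (restrictF x (Finset.Icc a b)) ≤ N x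

lemma restrictF_add (x y : ℕ →₀ ℝ) (E : Finset ℕ) :
    restrictF (x + y) E = restrictF x E + restrictF y E := Finsupp.filter_add

lemma restrictF_smul (a : ℝ) (x : ℕ →₀ ℝ) (E : Finset ℕ) :
    restrictF (a • x) E = a • restrictF x E := Finsupp.filter_smul

lemma restrictF_zero (E : Finset ℕ) : restrictF 0 E = 0 := Finsupp.filter_zero _

lemma restrictF_sum {ι : Type*} (s : Finset ι) (f : ι → (ℕ →₀ ℝ)) (E : Finset ℕ) :
    restrictF (∑ i ∈ s, f i) E = ∑ i ∈ s, restrictF (f i) E := by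
  classical
  induction s using Finset.induction_on with
  | empty => simp [restrictF_zero]
  | insert _ _ h ih => rw [Finset.sum_insert h, Finset.sum_insert h, restrictF_add, ih]

lemma N_zero (B : BmBasis) : B.N 0 = 0 := (B.norm_eq_zero_iff 0).2 rfl

lemma N_sum_le {ι : Type*} (B : BmBasis) (s : Finset ι) (f : ι → (ℕ →₀ ℝ)) :
    B.N (∑ i ∈ s, f i) ≤ ∑ i ∈ s, B.N (f i) := by
  classical
  induction s using Finset.induction_on with
  | empty => simp [N_zero]
  | insert _ _ h ih =>
      rw [Finset.sum_insert h, Finset.sum_insert h]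
      exact (B.norm_add_le _ _).trans (by linarith)

/-- A (finite) block sequence: nonzero vectors with successive supports. -/
def IsBlockSeq {k : ℕ} (x : Fin k → (ℕ →₀ ℝ)) : Prop :=
  (∀ i, x i ≠ 0) ∧
  ∀ i j : Fin k, i < j → ∀ p ∈ (x i).support, ∀ q ∈ (x j).support, p < q

/-- A sequence of successive intervals `E₁ < E₂ < ... < E_n` of `ℕ`. -/
def IsSuccIntervals {n : ℕ} (E : Fin n → Finset ℕ) : Prop :=
  (∀ j, ∃ a b : ℕ, E j = Finset.Icc a b) ∧
  ∀ j j' : Fin n, j < j' → ∀ p ∈ E j, ∀ q ∈ E j', p < q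

/-- The equivalent norm `‖x‖_n = sup {∑_{j=1}^n ‖E_j x‖ : E₁ < ... < E_n intervals}`. -/
noncomputable def normN (B : BmBasis) (n : ℕ) (x : ℕ →₀ ℝ) : ℝ :=
  sSup { s : ℝ | ∃ E : Fin n → Finset ℕ, IsSuccIntervals E ∧
    s = ∑ j, B.N (restrictF x (E j)) }

/-- if `ℓ₁` is finitely represented on normalized block sequences with
constant 2 in a space `U` with a bimonotone basis, then for every `n` there is a vector
`x` with `1/2 ≤ ‖x‖ ≤ ‖x‖_n ≤ 2`. -/
theorem lemma1_full (B : BmBasis)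
    (hrep : ∀ m : ℕ, ∃ x : Fin m → (ℕ →₀ ℝ), IsBlockSeq x ∧ (∀ i, B.N (x i) = 1) ∧
      ∀ a : Fin m → ℝ, ∑ i, |a i| ≤ 2 * B.N (∑ i, a i • x i)) :
    ∀ n : ℕ, 0 < n → ∃ x : ℕ →₀ ℝ,
      (1 : ℝ) / 2 ≤ B.N x ∧ B.N x ≤ normN B n x ∧ normN B n x ≤ 2 := by
  intro n hn
  classical
  obtain ⟨x, hblock, hnorm, hl1⟩ := hrep n
  set X : ℕ →₀ ℝ := ∑ i, x i with hX
  set z : ℕ →₀ ℝ := (n : ℝ)⁻¹ • X with hz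
  have hn' : (0:ℝ) < n := by exact_mod_cast hn
  -- lower bound on the norm
  have hhalf : (1:ℝ)/2 ≤ B.N z := by
    have h1 := hl1 (fun _ => (n:ℝ)⁻¹)
    have h2 : ∑ _i : Fin n, |(n:ℝ)⁻¹| = 1 := by
      rw [Finset.sum_const, Finset.card_univ, Fintype.card_fin, abs_of_pos (by positivity)]
      rw [nsmul_eq_mul]; field_simp
    have h3 : (∑ i : Fin n, (n:ℝ)⁻¹ • x i) = z := by
      rw [hz, hX, Finset.smul_sum]
    rw [h2, h3] at h1
    linarith
  -- key claim: for every admissible family of intervals the sum is ≤ 2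
  have key : ∀ E : Fin n → Finset ℕ, IsSuccIntervals E →
      ∑ j, B.N (restrictF z (E j)) ≤ 2 := by
    intro E hE
    set S : Finset (Fin n × Fin n) :=
      Finset.univ.filter (fun p : Fin n × Fin n => restrictF (x p.1) (E p.2) ≠ 0) with hS
    have hinc : ∀ p ∈ S, ∃ q : ℕ, x p.1 q ≠ 0 ∧ q ∈ E p.2 := by
      intro p hp
      rw [hS, Finset.mem_filter] at hp
      by_contra hcon
      push_neg at hcon
      apply hp.2
      ext q
      rw [restrictF, Finsupp.filter_apply]
      by_cases hq : q ∈ E p.2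
      · have hx0 : x p.1 q = 0 := by by_contra h; exact hcon q h hq
        simp [hq, hx0]
      · simp [hq]
    have hcard : S.card ≤ 2 * n := by
      have hmap : ∀ p ∈ S, (p.1 : ℕ) + (p.2 : ℕ) ∈ Finset.range (2*n) := by
        intro p _
        have := p.1.2; have := p.2.2
        simp only [Finset.mem_range]; omega
      have hinj : Set.InjOn (fun p : Fin n × Fin n => (p.1 : ℕ) + (p.2 : ℕ)) ↑S := by
        intro p hp q hq hpq
        rw [Finset.mem_coe] at hp hq
        simp only at hpq
        by_contra hne
        obtain ⟨a, ha, haE⟩ := hinc p hp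
        obtain ⟨b, hb, hbE⟩ := hinc q hq
        have hamem : a ∈ (x p.1).support := Finsupp.mem_support_iff.2 ha
        have hbmem : b ∈ (x q.1).support := Finsupp.mem_support_iff.2 hb
        rcases lt_trichotomy p.1 q.1 with h | h | h
        · have h1 : a < b := hblock.2 p.1 q.1 h a hamem b hbmem
          have hv : (p.1 : ℕ) < q.1 := h
          have h2 : q.2 < p.2 := by rw [Fin.lt_def]; omega
          have h3 : b < a := hE.2 q.2 p.2 h2 b hbE a haE
          omega
        · apply hne
          have hv : (p.1 : ℕ) = q.1 := by rw [h]
          exact Prod.ext h (Fin.ext (by omega))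
        · have h1 : b < a := hblock.2 q.1 p.1 h b hbmem a hamem
          have hv : (q.1 : ℕ) < p.1 := h
          have h2 : p.2 < q.2 := by rw [Fin.lt_def]; omega
          have h3 : a < b := hE.2 p.2 q.2 h2 a haE b hbE
          omega
      have := Finset.card_le_card_of_injOn _ hmap hinj
      simpa using this
    have hterm : ∀ p : Fin n × Fin n, B.N (restrictF (x p.1) (E p.2)) ≤ 1 := by
      intro p
      obtain ⟨a, b, hab⟩ := hE.1 p.2
      rw [hab]
      calc B.N (restrictF (x p.1) (Finset.Icc a b)) ≤ B.N (x p.1) := B.bimono _ a b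
        _ = 1 := hnorm p.1
    have hsum : ∑ j, B.N (restrictF X (E j)) ≤ 2 * (n:ℝ) := by
      calc ∑ j, B.N (restrictF X (E j))
          ≤ ∑ j, ∑ i, B.N (restrictF (x i) (E j)) := by
            refine Finset.sum_le_sum fun j _ => ?_
            rw [hX, restrictF_sum]
            exact N_sum_le B _ _
        _ = ∑ i : Fin n, ∑ j : Fin n, B.N (restrictF (x i) (E j)) := Finset.sum_comm
        _ = ∑ p ∈ Finset.univ ×ˢ Finset.univ, B.N (restrictF (x p.1) (E p.2)) := by
            rw [Finset.sum_product]
        _ = ∑ p ∈ S, B.N (restrictF (x p.1) (E p.2)) := by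
            rw [Finset.univ_product_univ]
            symm
            refine Finset.sum_subset (Finset.filter_subset _ _) ?_
            intro p hp hnp
            have h0 : restrictF (x p.1) (E p.2) = 0 := by
              by_contra hne
              exact hnp (Finset.mem_filter.2 ⟨Finset.mem_univ _, hne⟩)
            rw [h0, N_zero]
        _ ≤ S.card • (1:ℝ) := Finset.sum_le_card_nsmul _ _ _ (fun p _ => hterm p)
        _ = (S.card : ℝ) := by simp
        _ ≤ 2 * (n:ℝ) := by exact_mod_cast hcard
    have heq : ∑ j, B.N (restrictF z (E j)) = (n:ℝ)⁻¹ * ∑ j, B.N (restrictF X (E j)) := by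
      rw [Finset.mul_sum]
      refine Finset.sum_congr rfl fun j _ => ?_
      rw [hz, restrictF_smul, B.norm_smul, abs_of_pos (by positivity)]
    rw [heq]
    calc (n:ℝ)⁻¹ * ∑ j, B.N (restrictF X (E j)) ≤ (n:ℝ)⁻¹ * (2 * (n:ℝ)) :=
          mul_le_mul_of_nonneg_left hsum (by positivity)
      _ = 2 := by field_simp
  -- the special family of intervals realizing `B.N z`
  set M : ℕ := z.support.sup id with hM
  set E0 : Fin n → Finset ℕ :=
    fun j => if (j : ℕ) = 0 then Finset.Icc 0 M else Finset.Icc 1 0 with hE0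
  have hE0succ : IsSuccIntervals E0 := by
    constructor
    · intro j
      by_cases h : (j:ℕ) = 0
      · exact ⟨0, M, by simp [hE0, h]⟩
      · exact ⟨1, 0, by simp [hE0, h]⟩
    · intro j j' hjj' p hp q hq
      have hne : (j':ℕ) ≠ 0 := by have := Fin.lt_def.1 hjj'; omega
      simp only [hE0, hne, if_false, Finset.mem_Icc] at hq
      omega
  have hsum0 : ∑ j, B.N (restrictF z (E0 j)) = B.N z := by
    rw [Finset.sum_eq_single_of_mem (⟨0, hn⟩ : Fin n) (Finset.mem_univ _)]
    · have h0 : E0 ⟨0,hn⟩ = Finset.Icc 0 M := by simp [hE0]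
      rw [h0]
      congr 1
      rw [restrictF]
      refine Finsupp.filter_eq_self_iff _ _ |>.2 fun q hq => ?_
      simp only [Finset.mem_Icc]
      exact ⟨Nat.zero_le _, Finset.le_sup (f := id) (Finsupp.mem_support_iff.2 hq)⟩
    · intro j _ hj
      have hne : (j:ℕ) ≠ 0 := fun h => hj (Fin.ext h)
      have h1 : E0 j = Finset.Icc 1 0 := by simp [hE0, hne]
      have h2 : restrictF z (Finset.Icc 1 0) = 0 := by
        ext q; rw [restrictF, Finsupp.filter_apply]; simp [Finset.mem_Icc]
      rw [h1, h2, N_zero]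
  have hmem : B.N z ∈ {s : ℝ | ∃ E : Fin n → Finset ℕ, IsSuccIntervals E ∧
      s = ∑ j, B.N (restrictF z (E j))} := ⟨E0, hE0succ, hsum0.symm⟩
  have hbdd : BddAbove {s : ℝ | ∃ E : Fin n → Finset ℕ, IsSuccIntervals E ∧
      s = ∑ j, B.N (restrictF z (E j))} := by
    refine ⟨2, ?_⟩
    rintro s ⟨E, hE, rfl⟩
    exact key E hE
  refine ⟨z, hhalf, ?_, ?_⟩
  · exact le_csSup hbdd hmem
  · refine csSup_le ⟨_, hmem⟩ ?_
    rintro s ⟨E, hE, rfl⟩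
    exact key E hE
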